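/- Let B be a bialgebra over a field k with multiplication m, unit η, comultiplication Δ, and counit ε. If B admits an antipode S (so that B is a Hopf algebra), then the linear map W on B ⊗ B defined by W(a ⊗ b) = Δ(a)(1 ⊗ b) is invertible, with inverse V(a ⊗ b) = ((id ⊗ S)(Δ(a)))(1 ⊗ b). -/

import Mathlib

open TensorProduct

open Coalgebra HopfAlgebra in
/-- Counit axiom in Sweedler form: `∑ ε(a₍₂₎) • a₍₁₎ = a`. -/
lemma aux_sum_counit_smul {k B : Type*} [CommSemiring k] [AddCommMonoid B] [Module k B]
    [Coalgebra k B] {a : B} (repr : Coalgebra.Repr k a (B × B)) :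
    ∑ i ∈ repr.index, Coalgebra.counit (R := k) (repr.right i) • repr.left i = a := by
  calc ∑ i ∈ repr.index, Coalgebra.counit (R := k) (repr.right i) • repr.left i
      = TensorProduct.rid k B
          (∑ i ∈ repr.index, repr.left i ⊗ₜ[k] Coalgebra.counit (R := k) (repr.right i)) := by
        rw [map_sum]; simp
    _ = a := by rw [Coalgebra.sum_tmul_counit_eq (R := k) repr]; simp

/-- In a Hopf algebra B over a field k, the fundamental operator
W(a ⊗ b) = Δ(a)(1 ⊗ b) is invertible with inverse
V(a ⊗ b) = ((id ⊗ S)(Δ a))(1 ⊗ b). -/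
theorem fundamental_operator_invertible_of_antipode
    (k : Type*) (B : Type*) [Field k] [Ring B] [HopfAlgebra k B]
    (W V : B ⊗[k] B →ₗ[k] B ⊗[k] B)
    (hW : ∀ a b : B, W (a ⊗ₜ b) = Coalgebra.comul (R := k) a * ((1 : B) ⊗ₜ b))
    (hV : ∀ a b : B, V (a ⊗ₜ b) =
      (TensorProduct.map LinearMap.id (HopfAlgebra.antipode (R := k)))
        (Coalgebra.comul (R := k) a) * ((1 : B) ⊗ₜ b)) :
    V ∘ₗ W = LinearMap.id ∧ W ∘ₗ V = LinearMap.id ∧ Function.Bijective W := by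
  classical
  set S : B →ₗ[k] B := HopfAlgebra.antipode (R := k) with hS
  have hVW : V ∘ₗ W = LinearMap.id := by
    apply TensorProduct.ext'
    intro a b
    simp only [LinearMap.comp_apply, LinearMap.id_apply]
    set ra := Coalgebra.Repr.arbitrary k a with hra
    set a₁ : (i : ra.ι) → Coalgebra.Repr k (ra.left i) (B × B) :=
      fun i => Coalgebra.Repr.arbitrary k (ra.left i) with ha₁
    set a₂ : (i : ra.ι) → Coalgebra.Repr k (ra.right i) (B × B) :=
      fun i => Coalgebra.Repr.arbitrary k (ra.right i) with ha₂
    -- step 1 : W (a ⊗ b)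
    have hWa : W (a ⊗ₜ b) = ∑ i ∈ ra.index, ra.left i ⊗ₜ[k] (ra.right i * b) := by
      rw [hW, ← ra.eq, Finset.sum_mul]
      simp [Algebra.TensorProduct.tmul_mul_tmul]
    -- step 2 : V (W (a ⊗ b)) as a double sum
    have hVWa : V (W (a ⊗ₜ b)) = ∑ i ∈ ra.index, ∑ j ∈ (a₁ i).index,
        (a₁ i).left j ⊗ₜ[k] (S ((a₁ i).right j) * (ra.right i * b)) := by
      rw [hWa, map_sum]
      refine Finset.sum_congr rfl fun i _ => ?_
      rw [hV, ← (a₁ i).eq, map_sum, Finset.sum_mul]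
      simp [Algebra.TensorProduct.tmul_mul_tmul]
    rw [hVWa]
    -- step 3 : apply `id ⊗ (u ⊗ v ↦ S u * v * b)` to coassociativity
    set h : B ⊗[k] B →ₗ[k] B :=
      (LinearMap.mulRight k b) ∘ₗ (LinearMap.mul' k B) ∘ₗ (LinearMap.rTensor B S) with hh
    have key := congrArg (LinearMap.lTensor B h) (Coalgebra.sum_tmul_tmul_eq ra a₁ a₂)
    simp only [map_sum, LinearMap.lTensor_tmul, hh, LinearMap.comp_apply,
      LinearMap.rTensor_tmul, LinearMap.mul'_apply, LinearMap.mulRight_apply] at key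
    simp only [mul_assoc] at key ⊢
    rw [key]
    -- step 4 : use the antipode axiom and the counit axiom
    have : ∀ i ∈ ra.index, ∑ j ∈ (a₂ i).index,
        ra.left i ⊗ₜ[k] (S ((a₂ i).left j) * ((a₂ i).right j * b)) =
        Coalgebra.counit (R := k) (ra.right i) • (ra.left i ⊗ₜ[k] b) := by
      intro i _
      rw [← TensorProduct.tmul_sum]
      simp only [← mul_assoc, ← Finset.sum_mul]
      rw [hS, HopfAlgebra.sum_antipode_mul_eq_smul (a₂ i)]
      rw [smul_mul_assoc, one_mul, TensorProduct.tmul_smul]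
    rw [Finset.sum_congr rfl this]
    simp only [TensorProduct.smul_tmul']
    rw [← TensorProduct.sum_tmul, aux_sum_counit_smul ra]
  have hWV : W ∘ₗ V = LinearMap.id := by
    apply TensorProduct.ext'
    intro a b
    simp only [LinearMap.comp_apply, LinearMap.id_apply]
    set ra := Coalgebra.Repr.arbitrary k a with hra
    set a₁ : (i : ra.ι) → Coalgebra.Repr k (ra.left i) (B × B) :=
      fun i => Coalgebra.Repr.arbitrary k (ra.left i) with ha₁
    set a₂ : (i : ra.ι) → Coalgebra.Repr k (ra.right i) (B × B) :=
      fun i => Coalgebra.Repr.arbitrary k (ra.right i) with ha₂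
    have hVa : V (a ⊗ₜ b) = ∑ i ∈ ra.index, ra.left i ⊗ₜ[k] (S (ra.right i) * b) := by
      rw [hV, ← ra.eq, map_sum, Finset.sum_mul]
      simp [Algebra.TensorProduct.tmul_mul_tmul]
    have hWVa : W (V (a ⊗ₜ b)) = ∑ i ∈ ra.index, ∑ j ∈ (a₁ i).index,
        (a₁ i).left j ⊗ₜ[k] ((a₁ i).right j * (S (ra.right i) * b)) := by
      rw [hVa, map_sum]
      refine Finset.sum_congr rfl fun i _ => ?_
      rw [hW, ← (a₁ i).eq, Finset.sum_mul]
      simp [Algebra.TensorProduct.tmul_mul_tmul]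
    rw [hWVa]
    set h : B ⊗[k] B →ₗ[k] B :=
      (LinearMap.mulRight k b) ∘ₗ (LinearMap.mul' k B) ∘ₗ (LinearMap.lTensor B S) with hh
    have key := congrArg (LinearMap.lTensor B h) (Coalgebra.sum_tmul_tmul_eq ra a₁ a₂)
    simp only [map_sum, LinearMap.lTensor_tmul, hh, LinearMap.comp_apply,
      LinearMap.mul'_apply, LinearMap.mulRight_apply] at key
    simp only [mul_assoc] at key ⊢
    rw [key]
    have : ∀ i ∈ ra.index, ∑ j ∈ (a₂ i).index,
        ra.left i ⊗ₜ[k] ((a₂ i).left j * (S ((a₂ i).right j) * b)) =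
        Coalgebra.counit (R := k) (ra.right i) • (ra.left i ⊗ₜ[k] b) := by
      intro i _
      rw [← TensorProduct.tmul_sum]
      simp only [← mul_assoc, ← Finset.sum_mul]
      rw [hS, HopfAlgebra.sum_mul_antipode_eq_smul (a₂ i)]
      rw [smul_mul_assoc, one_mul, TensorProduct.tmul_smul]
    rw [Finset.sum_congr rfl this]
    simp only [TensorProduct.smul_tmul']
    rw [← TensorProduct.sum_tmul, aux_sum_counit_smul ra]
  refine ⟨hVW, hWV, ?_⟩
  have hl : Function.LeftInverse V W := fun x => LinearMap.congr_fun hVW x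
  have hr : Function.RightInverse V W := fun x => LinearMap.congr_fun hWV x
  exact ⟨hl.injective, hr.surjective⟩
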